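/- Let A = (a, ha+d, ha+jd) with a, j > 2, h ≥ d ≥ 1, gcd(a, d) = 1, and write a = kj − t with k ≥ 1 and 0 ≤ t ≤ j−1. Then: if t = 0, g(A) = ha²/j + (j−2)ha + (a−1)d − a; if t = 1, g(A) = ha(a+1)/j + (j−3)ha + (a−1)d − a; and if 2 ≤ t ≤ j−1 and hk + d − ht ≥ 0, then g(A) = ⌊a/j⌋·(ha+jd) + (j−2)ha − d − a. -/

import Mathlib

/-- `m` is representable by the sequence `A`. -/
def IsRepresentable {n : ℕ} (A : Fin n → ℕ) (m : ℕ) : Prop :=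
  ∃ x : Fin n → ℕ, m = ∑ i, A i * x i

/-- `n % j + n / j`: the minimal value of `y + z` over `y + j z = n`. -/
def uu (j n : ℕ) : ℕ := n % j + n / j

/-- The minimal cost of realizing `y + j z = n`. -/
def vv (a j h d n : ℕ) : ℕ := h * a * uu j n + d * n

lemma repr_iff (a j h d m : ℕ) :
    IsRepresentable ![a, h * a + d, h * a + j * d] m ↔
      ∃ x y z : ℕ, m = a * x + h * a * (y + z) + d * (y + j * z) := by
  constructor
  · rintro ⟨x, rfl⟩
    exact ⟨x 0, x 1, x 2, by simp [Fin.sum_univ_three]; ring⟩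
  · rintro ⟨x, y, z, rfl⟩
    exact ⟨![x, y, z], by simp [Fin.sum_univ_three]; ring⟩

lemma uu_le (j : ℕ) (hj : 0 < j) (y z : ℕ) : uu j (y + j * z) ≤ y + z := by
  set n := y + j * z with hn
  have hz : z ≤ n / j := (Nat.le_div_iff_mul_le hj).2 (by
    have : z * j = j * z := Nat.mul_comm z j
    omega)
  obtain ⟨e, he⟩ : ∃ e, n / j = z + e := ⟨n / j - z, by omega⟩
  have h1 : n % j + j * (n / j) = n := Nat.mod_add_div n j
  have h2 : j * (z + e) = j * z + j * e := by ring
  have h3 : e ≤ j * e := Nat.le_mul_of_pos_left e hj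
  rw [he] at h1
  unfold uu
  rw [he]
  omega

lemma uu_add (j : ℕ) (hj : 0 < j) (n m : ℕ) :
    uu j (n + m) = uu j n + uu j m ∨
      (uu j (n + m) + (j - 1) = uu j n + uu j m ∧ 1 ≤ m % j) := by
  have h1 : n % j + j * (n / j) = n := Nat.mod_add_div n j
  have h2 : m % j + j * (m / j) = m := Nat.mod_add_div m j
  have hn : n % j < j := Nat.mod_lt _ hj
  have hm : m % j < j := Nat.mod_lt _ hj
  by_cases hc : n % j + m % j < j
  · left
    have he : n + m = j * (n / j + m / j) + (n % j + m % j) := by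
      have : j * (n / j + m / j) = j * (n / j) + j * (m / j) := by ring
      omega
    have hdiv : (n + m) / j = n / j + m / j := by
      rw [he, Nat.mul_add_div hj, Nat.div_eq_of_lt hc]; omega
    have hmod : (n + m) % j = n % j + m % j := by
      rw [he, Nat.mul_add_mod, Nat.mod_eq_of_lt hc]
    unfold uu; omega
  · right
    refine ⟨?_, by omega⟩
    have he : n + m = j * (n / j + m / j + 1) + (n % j + m % j - j) := by
      have : j * (n / j + m / j + 1) = j * (n / j) + j * (m / j) + j := by ring
      omega
    have hr : n % j + m % j - j < j := by omega
    have hdiv : (n + m) / j = n / j + m / j + 1 := by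
      rw [he, Nat.mul_add_div hj, Nat.div_eq_of_lt hr]
    have hmod : (n + m) % j = n % j + m % j - j := by
      rw [he, Nat.mul_add_mod, Nat.mod_eq_of_lt hr]
    unfold uu; omega

lemma vv_mono (a j h d : ℕ) {s s' : ℕ} (h1 : s ≤ s') (h2 : uu j s ≤ uu j s') :
    vv a j h d s ≤ vv a j h d s' :=
  Nat.add_le_add (Nat.mul_le_mul_left _ h2) (Nat.mul_le_mul_left _ h1)

lemma vv_step (a j h d : ℕ) (hj : 0 < j)
    (hcond : 1 ≤ a % j → h * (j - 1) ≤ h * uu j a + d) (s : ℕ) :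
    vv a j h d s ≤ vv a j h d (s + a) := by
  rcases uu_add j hj s a with he | ⟨he, hm⟩
  · apply vv_mono _ _ _ _ (by omega) (by omega)
  · have hc := hcond hm
    have h1 : a * (h * (j - 1)) ≤ a * (h * uu j a + d) := Nat.mul_le_mul_left a hc
    have e1 : a * (h * (j - 1)) = h * a * (j - 1) := by ring
    have e2 : a * (h * uu j a + d) = h * a * uu j a + d * a := by ring
    have e3 : h * a * (uu j s + uu j a) = h * a * uu j s + h * a * uu j a := by ring
    have e4 : h * a * (uu j (s + a) + (j - 1)) = h * a * uu j (s + a) + h * a * (j - 1) := by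
      ring
    have e5 : h * a * (uu j s + uu j a) = h * a * (uu j (s + a) + (j - 1)) := by rw [he]
    have e6 : d * (s + a) = d * s + d * a := by ring
    unfold vv
    omega

lemma vv_class (a j h d : ℕ) (hj : 0 < j)
    (hcond : 1 ≤ a % j → h * (j - 1) ≤ h * uu j a + d) (s q : ℕ) :
    vv a j h d s ≤ vv a j h d (s + a * q) := by
  induction q with
  | zero => simp
  | succ q ih =>
      have : s + a * (q + 1) = (s + a * q) + a := by ring
      rw [this]
      exact le_trans ih (vv_step a j h d hj hcond (s + a * q))

lemma not_repr (a j h d : ℕ) (ha : 0 < a) (hj : 0 < j) (had : Nat.gcd a d = 1)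
    (hcond : 1 ≤ a % j → h * (j - 1) ≤ h * uu j a + d)
    (s N : ℕ) (hs : s < a) (hN : N + a = vv a j h d s) :
    ¬ IsRepresentable ![a, h * a + d, h * a + j * d] N := by
  rw [repr_iff]
  rintro ⟨x, y, z, hxyz⟩
  set n := y + j * z with hn
  have hub : vv a j h d n ≤ N := by
    have := uu_le j hj y z
    unfold vv
    calc h * a * uu j n + d * n ≤ h * a * (y + z) + d * n :=
          Nat.add_le_add_right (Nat.mul_le_mul_left _ this) _
    _ ≤ N := by omega
  have hm1 : d * n ≡ N [MOD a] := by
    have : N = a * (x + h * (y + z)) + d * n := by rw [hxyz]; ring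
    rw [this]
    exact (Nat.mul_add_mod a (x + h * (y+z)) (d*n)).symm
  have hm2 : N ≡ d * s [MOD a] := by
    have h1 : d * s ≡ h * a * uu j s + d * s [MOD a] := by
      have : h * a * uu j s + d * s = a * (h * uu j s) + d * s := by ring
      rw [this]
      exact (Nat.mul_add_mod a (h * uu j s) (d*s)).symm
    have h2 : vv a j h d s ≡ N [MOD a] := by
      rw [← hN]; exact Nat.add_mod_right N a
    exact (h1.trans h2).symm
  have hm3 : d * n ≡ d * s [MOD a] := hm1.trans hm2
  have hns : n ≡ s [MOD a] := Nat.ModEq.cancel_left_of_coprime had hm3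
  have hse : s = n % a := by
    have := hns.symm
    unfold Nat.ModEq at this
    rw [Nat.mod_eq_of_lt hs] at this
    omega
  have hnd : n = s + a * (n / a) := by
    have := Nat.mod_add_div n a
    omega
  have : vv a j h d s ≤ vv a j h d n := by
    rw [hnd] at *
    exact vv_class a j h d hj hcond s (n/a)
  omega

lemma repr_above (a j h d : ℕ) (ha : 2 < a) (had : Nat.gcd a d = 1)
    (N m : ℕ) (hmax : ∀ s < a, vv a j h d s ≤ N + a) (hm : N < m) :
    IsRepresentable ![a, h * a + d, h * a + j * d] m := by
  haveI : NeZero a := ⟨by omega⟩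
  set e : (ZMod a)ˣ := ZMod.unitOfCoprime d (by rwa [Nat.gcd_comm] at had)
  set s : ℕ := (((e⁻¹ : (ZMod a)ˣ) : ZMod a) * (m : ZMod a)).val with hs
  have hsa : s < a := ZMod.val_lt _
  have hds : (d : ZMod a) * (s : ZMod a) = (m : ZMod a) := by
    rw [hs, ZMod.natCast_val, ZMod.cast_id]
    have he : ((e : (ZMod a)ˣ) : ZMod a) = (d : ZMod a) := rfl
    rw [← mul_assoc, ← he, ← Units.val_mul, mul_inv_cancel]
    simp
  have hmod : d * s ≡ m [MOD a] := by
    rw [← Nat.cast_mul] at hds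
    exact (ZMod.natCast_eq_natCast_iff _ _ _).1 hds
  have hvmod : vv a j h d s ≡ m [MOD a] := by
    refine Nat.ModEq.trans ?_ hmod
    unfold vv
    have : h * a * uu j s + d * s = a * (h * uu j s) + d * s := by ring
    rw [this]
    exact Nat.mul_add_mod a _ _
  have hvle : vv a j h d s ≤ m := by
    rcases le_or_gt (vv a j h d s) m with h' | h'
    · exact h'
    · exfalso
      have hdvd : a ∣ vv a j h d s - m := (Nat.modEq_iff_dvd' h'.le).1 hvmod.symm
      have h1 : vv a j h d s ≤ N + a := hmax s hsa
      have h2 : 0 < vv a j h d s - m := by omega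
      have := Nat.le_of_dvd h2 hdvd
      omega
  have hdvd2 : a ∣ m - vv a j h d s := (Nat.modEq_iff_dvd' hvle).1 hvmod
  obtain ⟨x, hx⟩ := hdvd2
  rw [repr_iff]
  refine ⟨x, s % j, s / j, ?_⟩
  have h3 : s % j + j * (s / j) = s := Nat.mod_add_div s j
  have h4 : vv a j h d s = h * a * (s % j + s / j) + d * s := rfl
  rw [h3]
  omega

lemma uu_eval (j q r : ℕ) (hj : 0 < j) (hr : r < j) : uu j (j * q + r) = r + q := by
  unfold uu
  rw [Nat.mul_add_div hj, Nat.mul_add_mod, Nat.mod_eq_of_lt hr, Nat.div_eq_of_lt hr]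
  omega

lemma dec (j s : ℕ) (hj : 0 < j) : ∃ q r, r < j ∧ s = j * q + r :=
  ⟨s / j, s % j, Nat.mod_lt _ hj, (Nat.div_add_mod s j).symm⟩

lemma mul_pred (j k : ℕ) (hk : 1 ≤ k) : j * (k - 1) + j = j * k := by
  obtain ⟨k', rfl⟩ : ∃ k', k = k' + 1 := ⟨k - 1, by omega⟩
  simp [Nat.mul_succ]

lemma max0 (a j h d k : ℕ) (hj : 0 < j) (hk : 1 ≤ k) (hakt : a = k * j) :
    ∀ s < a, vv a j h d s ≤ vv a j h d (j * (k - 1) + (j - 1)) := by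
  intro s hs
  obtain ⟨q, r, hr, rfl⟩ := dec j s hj
  have hP : j * (k - 1) + j = j * k := mul_pred j k hk
  have hcm : j * k = k * j := Nat.mul_comm j k
  have hq : q ≤ k - 1 := by
    by_contra hq
    have : j * (k - 1) + j ≤ j * q := by
      calc j * (k - 1) + j = j * (k - 1 + 1) := by ring
      _ ≤ j * q := Nat.mul_le_mul_left _ (by omega)
    omega
  have hju : j * q ≤ j * (k - 1) := Nat.mul_le_mul_left _ hq
  apply vv_mono a j h d (by omega)
  rw [uu_eval j q r hj hr, uu_eval j (k-1) (j-1) hj (by omega)]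
  omega

lemma max1 (a j h d k : ℕ) (hj : 2 < j) (hk : 1 ≤ k) (hakt : a + 1 = k * j) :
    ∀ s < a, vv a j h d s ≤ vv a j h d (j * (k - 1) + (j - 2)) := by
  intro s hs
  obtain ⟨q, r, hr, rfl⟩ := dec j s (by omega)
  have hP : j * (k - 1) + j = j * k := mul_pred j k hk
  have hcm : j * k = k * j := Nat.mul_comm j k
  have hq : q ≤ k - 1 := by
    by_contra hq
    have : j * (k - 1) + j ≤ j * q := by
      calc j * (k - 1) + j = j * (k - 1 + 1) := by ring
      _ ≤ j * q := Nat.mul_le_mul_left _ (by omega)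
    omega
  rcases Nat.lt_or_ge q (k - 1) with h' | h'
  · have hju : j * q + j ≤ j * (k - 1) := by
      calc j * q + j = j * (q + 1) := by ring
      _ ≤ j * (k - 1) := Nat.mul_le_mul_left _ (by omega)
    apply vv_mono a j h d (by omega)
    rw [uu_eval j q r (by omega) hr, uu_eval j (k-1) (j-2) (by omega) (by omega)]
    omega
  · have he : q = k - 1 := le_antisymm hq h'
    have hje : j * q = j * (k - 1) := by rw [he]
    apply vv_mono a j h d (by omega)
    rw [uu_eval j q r (by omega) hr, uu_eval j (k-1) (j-2) (by omega) (by omega)]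
    omega

lemma max2 (a j h d k t : ℕ) (hj : 2 < j) (hk : 2 ≤ k) (ht2 : 2 ≤ t) (htj : t ≤ j - 1)
    (hdh : d ≤ h) (hakt : a + t = k * j) :
    ∀ s < a, vv a j h d s ≤ vv a j h d (j * (k - 2) + (j - 1)) := by
  intro s hs
  obtain ⟨q, r, hr, rfl⟩ := dec j s (by omega)
  have hP2 : j * (k - 2) + j = j * (k - 1) := by
    have := mul_pred j (k-1) (by omega)
    have e : k - 1 - 1 = k - 2 := by omega
    rw [e] at this
    exact this
  have hP : j * (k - 1) + j = j * k := mul_pred j k (by omega)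
  have hcm : j * k = k * j := Nat.mul_comm j k
  have hq : q ≤ k - 1 := by
    by_contra hq
    have : j * (k - 1) + j ≤ j * q := by
      calc j * (k - 1) + j = j * (k - 1 + 1) := by ring
      _ ≤ j * q := Nat.mul_le_mul_left _ (by omega)
    omega
  rcases Nat.lt_or_ge q (k - 1) with h' | h'
  · have hju : j * q ≤ j * (k - 2) := Nat.mul_le_mul_left _ (by omega)
    apply vv_mono a j h d (by omega)
    rw [uu_eval j q r (by omega) hr, uu_eval j (k-2) (j-1) (by omega) (by omega)]
    omega
  · have he : q = k - 1 := le_antisymm hq h'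
    have hje : j * q = j * (k - 1) := by rw [he]
    have hrt : r + t < j := by omega
    have hra : r + 1 ≤ a := by omega
    have k1 : d * (r + 1) ≤ h * a := Nat.mul_le_mul hdh hra
    have k2 : h * a ≤ h * a * (j - 2 - r) := Nat.le_mul_of_pos_right _ (by omega)
    unfold vv
    rw [uu_eval j q r (by omega) hr, uu_eval j (k-2) (j-1) (by omega) (by omega)]
    have e7 : h * a * (r + q) + h * a * (j - 2 - r) = h * a * (j - 1 + (k - 2)) := by
      have : (r + q) + (j - 2 - r) = j - 1 + (k - 2) := by omega
      rw [← this]; ring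
    have e8 : d * (j * q + r) = d * (j * (k - 2) + (j - 1)) + d * (r + 1) := by
      have : j * q + r = (j * (k - 2) + (j - 1)) + (r + 1) := by omega
      rw [this]; ring
    omega

lemma max3 (a j h d : ℕ) (hja : a < j) :
    ∀ s < a, vv a j h d s ≤ vv a j h d (a - 1) := by
  intro s hs
  apply vv_mono a j h d (by omega)
  unfold uu
  rw [Nat.mod_eq_of_lt (by omega), Nat.div_eq_of_lt (by omega),
    Nat.mod_eq_of_lt (by omega), Nat.div_eq_of_lt (by omega)]
  omega

lemma frob (a j h d : ℕ) (ha : 2 < a) (hj : 0 < j) (had : Nat.gcd a d = 1)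
    (hcond : 1 ≤ a % j → h * (j - 1) ≤ h * uu j a + d)
    (S : ℕ) (hS : S < a) (hmax : ∀ s < a, vv a j h d s ≤ vv a j h d S)
    (hvS : a ≤ vv a j h d S)
    (g : ℕ) (hg : IsGreatest {m : ℕ | ¬ IsRepresentable ![a, h * a + d, h * a + j * d] m} g) :
    g + a = vv a j h d S := by
  set N := vv a j h d S - a with hNdef
  have hN : N + a = vv a j h d S := by omega
  have h1 : N ≤ g := hg.2 (not_repr a j h d (by omega) hj had hcond S N hS hN)
  have h2 : g ≤ N := by
    by_contra hcon
    exact hg.1 (repr_above a j h d ha had N g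
      (fun s hs => by rw [hN]; exact hmax s hs) (by omega))
  omega

-- helper: `a ≤ vv` when `uu ≥ 1` and `h ≥ 1`
lemma vv_ge (a j h d S : ℕ) (hh : 1 ≤ h) (hu : 1 ≤ uu j S) : a ≤ vv a j h d S := by
  have t1 : a ≤ h * a := Nat.le_mul_of_pos_left a (by omega)
  have t2 : h * a ≤ h * a * uu j S := Nat.le_mul_of_pos_right _ (by omega)
  unfold vv
  omega

lemma mulsub (h x y : ℕ) (hxy : y ≤ x) : h * (x - y) + h * y = h * x := by
  have e : x - y + y = x := by omega
  calc h * (x - y) + h * y = h * (x - y + y) := by ring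
  _ = h * x := by rw [e]

theorem stmt_7 (a j h d k t : ℕ) (ha : 2 < a) (hj : 2 < j) (hd : 0 < d)
    (hdh : d ≤ h) (had : Nat.gcd a d = 1) (hk : 1 ≤ k) (ht : t ≤ j - 1)
    (hakt : a + t = k * j)
    (g : ℕ)
    (hg : IsGreatest {m : ℕ | ¬ IsRepresentable ![a, h * a + d, h * a + j * d] m} g) :
    (t = 0 →
      (g : ℚ) = h * a ^ 2 / j + ((j : ℚ) - 2) * h * a + ((a : ℚ) - 1) * d - a) ∧
    (t = 1 →
      (g : ℚ) = h * a * ((a : ℚ) + 1) / j + ((j : ℚ) - 3) * h * a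
        + ((a : ℚ) - 1) * d - a) ∧
    (2 ≤ t → h * t ≤ h * k + d →
      (g : ℚ) = ((a / j : ℕ) : ℚ) * (h * a + j * d)
        + ((j : ℚ) - 2) * h * a - d - a) := by
  have hh : 1 ≤ h := le_trans hd hdh
  have hj0 : 0 < j := by omega
  have hP : j * (k - 1) + j = j * k := mul_pred j k hk
  have hcm : j * k = k * j := Nat.mul_comm j k
  refine ⟨?_, ?_, ?_⟩
  -- case t = 0
  · intro ht0
    subst ht0
    have hae : a = k * j := by omega
    have hmod0 : a % j = 0 := by rw [hae]; exact Nat.mul_mod_left k j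
    have hcond : 1 ≤ a % j → h * (j - 1) ≤ h * uu j a + d := by omega
    have hS : j * (k - 1) + (j - 1) < a := by omega
    have huS : uu j (j * (k - 1) + (j - 1)) = (j - 1) + (k - 1) :=
      uu_eval j (k - 1) (j - 1) hj0 (by omega)
    have geq := frob a j h d ha hj0 had hcond _ hS (max0 a j h d k hj0 hk hae)
      (vv_ge a j h d _ hh (by rw [huS]; omega)) g hg
    have gv : g + a = h * a * ((j - 1) + (k - 1)) + d * (j * (k - 1) + (j - 1)) := by
      unfold vv at geq
      rw [huS] at geq
      exact geq
    obtain ⟨j', rfl⟩ : ∃ j', j = j' + 3 := ⟨j - 3, by omega⟩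
    obtain ⟨k', rfl⟩ : ∃ k', k = k' + 1 := ⟨k - 1, by omega⟩
    rw [show j' + 3 - 1 = j' + 2 from by omega, show k' + 1 - 1 = k' from by omega] at gv
    have gq : (g : ℚ) + a = h * a * ((j' + 2) + k') + d * ((j' + 3) * k' + (j' + 2)) := by
      exact_mod_cast gv
    have aq : (a : ℚ) = (k' + 1) * (j' + 3) := by exact_mod_cast hae
    have hjq : ((j' : ℚ) + 3) ≠ 0 := by positivity
    push_cast
    rw [aq] at gq ⊢
    field_simp
    linear_combination gq
  -- case t = 1
  · intro ht1
    subst ht1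
    have hae : a + 1 = k * j := hakt
    have hav : a = j * (k - 1) + (j - 1) := by omega
    have hmod1 : a % j = j - 1 := by
      rw [hav, Nat.mul_add_mod, Nat.mod_eq_of_lt (by omega)]
    have huua : uu j a = (j - 1) + (k - 1) := by
      rw [hav]; exact uu_eval j (k - 1) (j - 1) hj0 (by omega)
    have e1 := mulsub h j 1 (by omega)
    have e3 := mulsub h k 1 hk
    have hcond : 1 ≤ a % j → h * (j - 1) ≤ h * uu j a + d := by
      intro _
      rw [huua]
      have e5 : h * ((j - 1) + (k - 1)) = h * (j - 1) + h * (k - 1) := by ring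
      omega
    have hS : j * (k - 1) + (j - 2) < a := by omega
    have huS : uu j (j * (k - 1) + (j - 2)) = (j - 2) + (k - 1) :=
      uu_eval j (k - 1) (j - 2) hj0 (by omega)
    have geq := frob a j h d ha hj0 had hcond _ hS (max1 a j h d k hj hk hae)
      (vv_ge a j h d _ hh (by rw [huS]; omega)) g hg
    have gv : g + a = h * a * ((j - 2) + (k - 1)) + d * (j * (k - 1) + (j - 2)) := by
      unfold vv at geq
      rw [huS] at geq
      exact geq
    obtain ⟨j', rfl⟩ : ∃ j', j = j' + 3 := ⟨j - 3, by omega⟩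
    obtain ⟨k', rfl⟩ : ∃ k', k = k' + 1 := ⟨k - 1, by omega⟩
    rw [show j' + 3 - 2 = j' + 1 from by omega, show k' + 1 - 1 = k' from by omega] at gv
    have gq : (g : ℚ) + a = h * a * ((j' + 1) + k') + d * ((j' + 3) * k' + (j' + 1)) := by
      exact_mod_cast gv
    have aq : (a : ℚ) + 1 = (k' + 1) * (j' + 3) := by exact_mod_cast hae
    have aq' : (a : ℚ) = (k' + 1) * (j' + 3) - 1 := by linarith
    have hjq : ((j' : ℚ) + 3) ≠ 0 := by positivity
    push_cast
    rw [aq'] at gq ⊢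
    field_simp
    linear_combination ((j' : ℚ) + 3) * gq
  -- case 2 ≤ t
  · intro ht2 hcnd
    have hav : a = j * (k - 1) + (j - t) := by omega
    have hmodt : a % j = j - t := by
      rw [hav, Nat.mul_add_mod, Nat.mod_eq_of_lt (by omega)]
    have huua : uu j a = (j - t) + (k - 1) := by
      rw [hav]; exact uu_eval j (k - 1) (j - t) hj0 (by omega)
    have e1 := mulsub h j 1 (by omega)
    have e2 := mulsub h j t (by omega)
    have e3 := mulsub h k 1 hk
    have hcond : 1 ≤ a % j → h * (j - 1) ≤ h * uu j a + d := by
      intro _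
      rw [huua]
      have e5 : h * ((j - t) + (k - 1)) = h * (j - t) + h * (k - 1) := by ring
      omega
    have hfloor : a / j = k - 1 := by
      rw [hav, Nat.mul_add_div hj0, Nat.div_eq_of_lt (by omega)]
      omega
    rcases Nat.lt_or_ge k 2 with hk1 | hk2
    · -- k = 1, forces h = d, t = 2, j = a + 2
      have hke : k = 1 := by omega
      subst hke
      have e6 : h * 2 ≤ h * t := Nat.mul_le_mul_left h ht2
      have e7 : h * 1 = h := by ring
      have e8 : h * 2 = h + h := by ring
      have hte : t = 2 := by
        have he' : h * t = h * 2 := by omega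
        exact Nat.eq_of_mul_eq_mul_left (by omega) he'
      have hde : d = h := by omega
      subst hte
      have hja : j = a + 2 := by
        have : 1 * j = j := by ring
        omega
      have hS : a - 1 < a := by omega
      have huS : uu j (a - 1) = a - 1 := by
        unfold uu
        rw [Nat.mod_eq_of_lt (by omega), Nat.div_eq_of_lt (by omega)]
        omega
      have geq := frob a j h d ha hj0 had hcond _ hS (max3 a j h d (by omega))
        (vv_ge a j h d _ hh (by rw [huS]; omega)) g hg
      have gv : g + a = h * a * (a - 1) + d * (a - 1) := by
        unfold vv at geq
        rw [huS] at geq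
        exact geq
      obtain ⟨a', rfl⟩ : ∃ a', a = a' + 3 := ⟨a - 3, by omega⟩
      rw [show a' + 3 - 1 = a' + 2 from by omega] at gv
      have gq : (g : ℚ) + ((a' : ℚ) + 3) =
          h * ((a' : ℚ) + 3) * ((a' : ℚ) + 2) + d * ((a' : ℚ) + 2) := by exact_mod_cast gv
      have hdq : (h : ℚ) = d := by exact_mod_cast hde.symm
      have hja' : j = a' + 5 := by omega
      have jq : (j : ℚ) = (a' : ℚ) + 5 := by exact_mod_cast hja'
      rw [Nat.div_eq_of_lt (by omega)]
      push_cast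
      rw [jq]
      linear_combination gq - ((a' : ℚ) + 3) * hdq
    · -- k ≥ 2
      have hP2 : j * (k - 2) + j = j * (k - 1) := by
        have := mul_pred j (k - 1) (by omega)
        have e : k - 1 - 1 = k - 2 := by omega
        rw [e] at this
        exact this
      have hS : j * (k - 2) + (j - 1) < a := by omega
      have huS : uu j (j * (k - 2) + (j - 1)) = (j - 1) + (k - 2) :=
        uu_eval j (k - 2) (j - 1) hj0 (by omega)
      have geq := frob a j h d ha hj0 had hcond _ hS
        (max2 a j h d k t hj hk2 ht2 ht hdh hakt)
        (vv_ge a j h d _ hh (by rw [huS]; omega)) g hg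
      have gv : g + a = h * a * ((j - 1) + (k - 2)) + d * (j * (k - 2) + (j - 1)) := by
        unfold vv at geq
        rw [huS] at geq
        exact geq
      rw [hfloor]
      obtain ⟨j', rfl⟩ : ∃ j', j = j' + 3 := ⟨j - 3, by omega⟩
      obtain ⟨k'', rfl⟩ : ∃ k'', k = k'' + 2 := ⟨k - 2, by omega⟩
      rw [show j' + 3 - 1 = j' + 2 from by omega, show k'' + 2 - 2 = k'' from by omega] at gv
      have gq : (g : ℚ) + a = h * a * ((j' + 2) + k'') + d * ((j' + 3) * k'' + (j' + 2)) := by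
        exact_mod_cast gv
      rw [show k'' + 2 - 1 = k'' + 1 from by omega]
      push_cast
      linear_combination gq
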